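/- The rooted tree series satisfies the formal differential equation (1 − w(x)) · x · w′(x) = w(x) in ℚ[[x]], where w′ denotes the formal derivative. Equivalently, the operator identity ∇_x = (1/(1−w)) ∇_w holds along w, with ∇_x := x d/dx. -/

import Mathlib

open Finset Polynomial

/-- Finite differences: the alternating binomial sum of `k ^ j` vanishes for `j < n`. -/
theorem lemA : ∀ (j n : ℕ), j < n →
    ∑ k ∈ Finset.range (n + 1), (-1 : ℚ) ^ k * (n.choose k : ℚ) * (k : ℚ) ^ j = 0 := by
  intro j
  induction j using Nat.strong_induction_on with
  | _ j IH =>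
    intro n hjn
    obtain ⟨m, rfl⟩ : ∃ m, n = m + 1 := ⟨n - 1, by omega⟩
    cases j with
    | zero =>
      have h := Int.alternating_sum_range_choose_of_ne (Nat.succ_ne_zero m)
      have : ((∑ k ∈ Finset.range (m + 2), ((-1) ^ k * (m+1).choose k : ℤ) : ℤ) : ℚ) = 0 := by
        rw [h]; norm_num
      push_cast at this
      simpa using this
    | succ i =>
      -- split off the k = 0 term (it is 0 since (0:ℚ)^(i+1) = 0)
      rw [Finset.sum_range_succ']
      simp only [Nat.cast_zero, zero_pow (Nat.succ_ne_zero i), mul_zero, add_zero]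
      -- now sum over k ∈ range (m+1) of term (k+1)
      have key : ∀ k ∈ Finset.range (m + 1),
          (-1 : ℚ) ^ (k+1) * ((m+1).choose (k+1) : ℚ) * ((k+1 : ℕ) : ℚ) ^ (i+1)
          = (-1 : ℚ) * (m+1) * ((-1:ℚ)^k * (m.choose k : ℚ) * ((k+1:ℕ) : ℚ) ^ i) := by
        intro k hk
        have h0 : (m+1) * m.choose k = (m+1).choose (k+1) * (k+1) := Nat.add_one_mul_choose_eq m k
        have hc : ((m:ℚ)+1) * (m.choose k : ℚ) = ((m+1).choose (k+1) : ℚ) * ((k:ℚ)+1) := by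
          exact_mod_cast congrArg (Nat.cast : ℕ → ℚ) h0
        push_cast
        linear_combination ((-1:ℚ))^(k+1) * ((k:ℚ)+1)^i * hc.symm
      rw [Finset.sum_congr rfl key, ← Finset.mul_sum]
      -- expand (k+1)^i by the binomial theorem and swap sums
      have expand : ∀ k ∈ Finset.range (m+1), (-1:ℚ)^k * (m.choose k : ℚ) * ((k+1:ℕ):ℚ)^i
          = ∑ t ∈ Finset.range (i+1), (i.choose t : ℚ) * ((-1:ℚ)^k * (m.choose k : ℚ) * (k:ℚ)^t) := by
        intro k hk
        have hb : ((k:ℚ)+1)^i = ∑ t ∈ Finset.range (i+1), (k:ℚ)^t * (i.choose t : ℚ) := by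
          simpa using add_pow (k:ℚ) 1 i
        push_cast
        rw [hb, Finset.mul_sum]
        refine Finset.sum_congr rfl fun t ht => by ring
      rw [Finset.sum_congr rfl expand, Finset.sum_comm]
      have inner : ∀ t ∈ Finset.range (i+1),
          ∑ k ∈ Finset.range (m+1), (i.choose t : ℚ) * ((-1:ℚ)^k * (m.choose k : ℚ) * (k:ℚ)^t) = 0 := by
        intro t ht
        rw [← Finset.mul_sum]
        have ht' := Finset.mem_range.mp ht
        have h0 : ∑ k ∈ Finset.range (m+1), (-1:ℚ)^k * (m.choose k : ℚ) * (k:ℚ)^t = 0 :=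
          IH t (by omega) m (by omega)
        rw [h0, mul_zero]
      rw [Finset.sum_congr rfl inner]
      simp


/-- Two polynomials over ℚ with equal derivatives and equal value at a point are equal. -/
theorem derivEq (p q : ℚ[X]) (x₀ : ℚ)
    (hd : Polynomial.derivative p = Polynomial.derivative q)
    (he : p.eval x₀ = q.eval x₀) : p = q := by
  have h1 : Polynomial.derivative (p - q) = 0 := by rw [derivative_sub, hd, sub_self]
  have h2 := Polynomial.eq_C_of_derivative_eq_zero h1
  have h3 : (p - q).eval x₀ = 0 := by rw [Polynomial.eval_sub, he, sub_self]
  rw [h2, Polynomial.eval_C] at h3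
  have h4 : p - q = 0 := by rw [h2, h3, map_zero]
  exact sub_eq_zero.mp h4

/-- The Abel-type polynomial identity
`∑_{k=1}^{N} C(N,k) k^{k-1} (X + c + N - k)^{N-k} = N (X + c + N)^{N-1}` with `N = n+1`. -/
theorem lemB (n : ℕ) : ∀ c : ℚ,
    ∑ k ∈ Finset.range (n+1),
      Polynomial.C (((n+1).choose (k+1) * (k+1)^k : ℕ) : ℚ) *
        (Polynomial.X + Polynomial.C (c + ((n - k : ℕ) : ℚ))) ^ (n - k)
    = Polynomial.C ((n : ℚ) + 1) * (Polynomial.X + Polynomial.C (c + (n : ℚ) + 1)) ^ n := by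
  induction n with
  | zero => intro c; simp
  | succ n IH =>
    intro c
    apply derivEq _ _ (-(c + (n:ℚ) + 2))
    · -- derivatives agree
      rw [derivative_sum]
      simp only [derivative_C_mul, derivative_pow, derivative_add, derivative_X, derivative_C,
        add_zero, mul_one]
      rw [Finset.sum_range_succ]
      have hlast : Polynomial.C (((n+2).choose (n+2) * (n+2)^(n+1) : ℕ) : ℚ) *
          (Polynomial.C ((((n+1) - (n+1) : ℕ) : ℚ)) *
            (Polynomial.X + Polynomial.C (c + (((n+1) - (n+1) : ℕ) : ℚ))) ^ ((n+1) - (n+1) - 1)) = 0 := by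
        simp
      rw [hlast, add_zero]
      have hterm : ∀ k ∈ Finset.range (n+1),
          Polynomial.C (((n+2).choose (k+1) * (k+1)^k : ℕ) : ℚ) *
            (Polynomial.C ((((n+1) - k : ℕ) : ℚ)) *
              (Polynomial.X + Polynomial.C (c + (((n+1) - k : ℕ) : ℚ))) ^ ((n+1) - k - 1))
          = Polynomial.C ((n:ℚ) + 2) *
              (Polynomial.C (((n+1).choose (k+1) * (k+1)^k : ℕ) : ℚ) *
                (Polynomial.X + Polynomial.C ((c+1) + ((n - k : ℕ) : ℚ))) ^ (n - k)) := by
        intro k hk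
        have hkn : k ≤ n := Nat.lt_succ_iff.mp (Finset.mem_range.mp hk)
        have e1 : (n+1) - k - 1 = n - k := by omega
        have e2 : (((n+1) - k : ℕ) : ℚ) = ((n - k : ℕ) : ℚ) + 1 := by
          have h : (n+1) - k = (n - k) + 1 := by omega
          rw [h]; push_cast; ring
        have e4 : c + (((n+1) - k : ℕ) : ℚ) = (c+1) + ((n - k : ℕ) : ℚ) := by rw [e2]; ring
        have hnat : ((n+2).choose (k+1) * (k+1)^k) * ((n+1) - k) = (n+2) * ((n+1).choose (k+1) * (k+1)^k) := by
          have h1 : (n+2).choose (k+2) * (k+2) = (n+2).choose (k+1) * ((n+2) - (k+1)) :=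
            Nat.choose_succ_right_eq (n+2) (k+1)
          have h2 : (n+2) * (n+1).choose (k+1) = (n+2).choose (k+2) * (k+2) :=
            Nat.add_one_mul_choose_eq (n+1) (k+1)
          have h3 : (n+2) - (k+1) = (n+1) - k := by omega
          rw [h3] at h1
          have key : (n+2).choose (k+1) * ((n+1) - k) = (n+2) * (n+1).choose (k+1) := by
            omega
          calc ((n+2).choose (k+1) * (k+1)^k) * ((n+1) - k)
              = ((n+2).choose (k+1) * ((n+1) - k)) * (k+1)^k := by ring
            _ = ((n+2) * (n+1).choose (k+1)) * (k+1)^k := by rw [key]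
            _ = (n+2) * ((n+1).choose (k+1) * (k+1)^k) := by ring
        have e3 : (((n+2).choose (k+1) * (k+1)^k : ℕ) : ℚ) * (((n - k : ℕ) : ℚ) + 1)
            = ((n:ℚ) + 2) * (((n+1).choose (k+1) * (k+1)^k : ℕ) : ℚ) := by
          have := congrArg (Nat.cast : ℕ → ℚ) hnat
          push_cast [e2] at this ⊢
          linarith [this]
        rw [e1, e4, e2]
        have e5 : Polynomial.C (((n+2).choose (k+1) * (k+1)^k : ℕ) : ℚ) *
            Polynomial.C (((n - k : ℕ) : ℚ) + 1)
            = Polynomial.C ((n:ℚ) + 2) * Polynomial.C (((n+1).choose (k+1) * (k+1)^k : ℕ) : ℚ) := by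
          rw [← Polynomial.C_mul, ← Polynomial.C_mul, e3]
        linear_combination ((Polynomial.X + Polynomial.C ((c+1) + ((n - k : ℕ) : ℚ))) ^ (n - k)) * e5
      rw [Finset.sum_congr rfl hterm, ← Finset.mul_sum, IH (c+1)]
      push_cast
      ring_nf
    · -- values at x₀ agree
      simp only [Polynomial.eval_finset_sum, Polynomial.eval_mul, Polynomial.eval_pow,
        Polynomial.eval_add, Polynomial.eval_X, Polynomial.eval_C]
      have hbase : -(c + (n:ℚ) + 2) + (c + (((n+1):ℕ):ℚ) + 1) = 0 := by push_cast; try ring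
      rw [hbase, zero_pow (Nat.succ_ne_zero n), mul_zero]
      have hterm : ∀ k ∈ Finset.range (n+2),
          (((n+2).choose (k+1) * (k+1)^k : ℕ) : ℚ) *
            (-(c + (n:ℚ) + 2) + (c + ((((n+1)) - k : ℕ) : ℚ))) ^ ((n+1) - k)
          = (-1:ℚ)^(n+1) * ((-1:ℚ)^k * (((n+2).choose (k+1) : ℕ) : ℚ) * ((k:ℚ)+1) ^ (n+1)) := by
        intro k hk
        have hkn : k ≤ n+1 := Nat.lt_succ_iff.mp (Finset.mem_range.mp hk)
        have hb : -(c + (n:ℚ) + 2) + (c + ((((n+1)) - k : ℕ) : ℚ)) = -((k:ℚ)+1) := by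
          push_cast [Nat.cast_sub hkn]; ring
        rw [hb]
        have hneg : (-((k:ℚ)+1)) ^ ((n+1) - k) = (-1:ℚ)^((n+1)-k) * ((k:ℚ)+1)^((n+1)-k) := by
          rw [neg_pow]
        have h2 : (-1:ℚ)^((n+1)-k) * (-1:ℚ)^k = (-1:ℚ)^(n+1) := by
          rw [← pow_add]; congr 1; omega
        have h3 : (-1:ℚ)^k * (-1:ℚ)^k = 1 := by
          rw [← pow_add]; exact Even.neg_one_pow ⟨k, rfl⟩
        have hsgn : (-1:ℚ)^((n+1)-k) = (-1:ℚ)^(n+1) * (-1:ℚ)^k := by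
          calc (-1:ℚ)^((n+1)-k) = (-1:ℚ)^((n+1)-k) * ((-1:ℚ)^k * (-1:ℚ)^k) := by rw [h3, mul_one]
            _ = ((-1:ℚ)^((n+1)-k) * (-1:ℚ)^k) * (-1:ℚ)^k := by ring
            _ = (-1:ℚ)^(n+1) * (-1:ℚ)^k := by rw [h2]
        have hpow : ((k:ℚ)+1)^k * ((k:ℚ)+1)^((n+1)-k) = ((k:ℚ)+1)^(n+1) := by
          rw [← pow_add]; congr 1; omega
        push_cast
        calc (((n+2).choose (k+1) : ℚ) * ((k:ℚ)+1)^k) * ((-((k:ℚ)+1)) ^ ((n+1) - k))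
            = ((n+2).choose (k+1) : ℚ) * ((k:ℚ)+1)^k * ((-1:ℚ)^((n+1)-k) * ((k:ℚ)+1)^((n+1)-k)) := by rw [hneg]
          _ = (-1:ℚ)^((n+1)-k) * (((n+2).choose (k+1) : ℚ)) * (((k:ℚ)+1)^k * ((k:ℚ)+1)^((n+1)-k)) := by ring
          _ = ((-1:ℚ)^(n+1) * (-1:ℚ)^k) * (((n+2).choose (k+1) : ℚ)) * ((k:ℚ)+1)^(n+1) := by rw [hsgn, hpow]
          _ = (-1:ℚ)^(n+1) * ((-1:ℚ)^k * (((n+2).choose (k+1) : ℕ) : ℚ) * ((k:ℚ)+1) ^ (n+1)) := by push_cast; ring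
      rw [Finset.sum_congr rfl hterm, ← Finset.mul_sum]
      have hA := lemA (n+1) (n+2) (by omega)
      rw [Finset.sum_range_succ'] at hA
      simp only [Nat.cast_zero, zero_pow (Nat.succ_ne_zero n), mul_zero, add_zero, pow_zero] at hA
      have : ∑ k ∈ Finset.range (n+2), (-1:ℚ)^k * (((n+2).choose (k+1) : ℕ) : ℚ) * ((k:ℚ)+1)^(n+1) = 0 := by
        have hx : ∀ k ∈ Finset.range (n+2),
            (-1:ℚ)^(k+1) * (((n+2).choose (k+1)) : ℚ) * (((k+1:ℕ)):ℚ)^(n+1)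
            = -((-1:ℚ)^k * (((n+2).choose (k+1) : ℕ) : ℚ) * ((k:ℚ)+1)^(n+1)) := by
          intro k hk; push_cast; ring
        rw [Finset.sum_congr rfl hx, Finset.sum_neg_distrib] at hA
        linarith [hA]
      rw [this, mul_zero]


/-- The key numerical identity `∑_{k=1}^{N} C(N,k) k^{k-1} (N-k)^{N-k} = N^N` with `N = n+1`. -/
theorem lemC (n : ℕ) :
    ∑ k ∈ Finset.range (n+1), (((n+1).choose (k+1) * (k+1)^k : ℕ) : ℚ) * ((n - k : ℕ) : ℚ) ^ (n - k)
    = ((n:ℚ) + 1) ^ (n+1) := by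
  have h := congrArg (Polynomial.eval (0:ℚ)) (lemB n 0)
  simp only [Polynomial.eval_finset_sum, Polynomial.eval_mul, Polynomial.eval_pow,
    Polynomial.eval_add, Polynomial.eval_X, Polynomial.eval_C, zero_add] at h
  rw [h, pow_succ]
  ring

open PowerSeries

/-- The rooted tree series `w(x) = Σ_{m≥1} (m^{m-1}/m!) x^m ∈ ℚ⟦x⟧`. -/
noncomputable def rootedTree : ℚ⟦X⟧ :=
  PowerSeries.mk fun m => if m = 0 then 0 else (m : ℚ) ^ (m - 1) / m.factorial

/-- The rooted tree series satisfies the formal differential equation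
`(1 − w(x)) · x · w′(x) = w(x)`, where `w′` is the formal derivative. -/
theorem rootedTree_ode :
    (1 - rootedTree) * (PowerSeries.X * PowerSeries.derivativeFun rootedTree) = rootedTree := by
  set a : ℕ → ℚ := fun m => if m = 0 then 0 else (m : ℚ) ^ (m - 1) / m.factorial with ha
  have hu : ∀ q : ℕ, (PowerSeries.coeff q) (PowerSeries.X * PowerSeries.derivativeFun rootedTree)
      = (q : ℚ) * a q := by
    intro q
    cases q with
    | zero => simp [PowerSeries.coeff_zero_X_mul, a]
    | succ m =>
      rw [PowerSeries.coeff_succ_X_mul, show rootedTree.derivativeFun = d⁄dX ℚ rootedTree from rfl, PowerSeries.coeff_derivative, ha]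
      simp only [rootedTree, PowerSeries.coeff_mk, Nat.succ_ne_zero, if_false,
        Nat.add_sub_cancel]
      push_cast
      ring
  ext n
  rw [sub_mul, one_mul, map_sub]
  rw [hu n]
  have hw : ∀ m, (PowerSeries.coeff m) rootedTree = a m := fun m => by
    simp [rootedTree, a]
  rw [hw n]
  rw [PowerSeries.coeff_mul]
  rw [Finset.Nat.sum_antidiagonal_eq_sum_range_succ_mk]
  simp only [hu, hw]
  -- now a purely numerical identity
  cases n with
  | zero => simp [a]
  | succ N =>
    -- peel off k = 0 from the convolution sum
    rw [Finset.sum_range_succ']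
    have h0 : a 0 = 0 := by simp [a]
    rw [h0, zero_mul, add_zero]
    -- peel off the last term (k = N), which vanishes
    rw [Finset.sum_range_succ]
    have hNN : N + 1 - (N + 1) = 0 := by omega
    rw [hNN, h0, mul_zero, mul_zero, add_zero]
    -- rewrite indices
    have hidx : ∀ k ∈ Finset.range N,
        a (k+1) * ((((N+1-(k+1) : ℕ)):ℚ) * a (N+1-(k+1)))
        = (((N+1).choose (k+1) * (k+1)^k : ℕ) : ℚ) * ((N - k : ℕ) : ℚ) ^ (N - k)
            / ((N+1).factorial : ℚ) := by
      intro k hk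
      have hkN : k < N := Finset.mem_range.mp hk
      have e0 : N + 1 - (k+1) = N - k := by omega
      rw [e0]
      have hnk : N - k ≠ 0 := by omega
      have hak : a (k+1) = ((k+1 : ℕ) : ℚ)^k / ((k+1).factorial : ℚ) := by
        simp [ha, Nat.add_sub_cancel]
      have hank : a (N-k) = ((N-k : ℕ) : ℚ)^(N-k-1) / ((N-k).factorial : ℚ) := by
        simp [ha, hnk]
      rw [hak, hank]
      have hpow : ((N-k : ℕ) : ℚ) * ((N-k : ℕ) : ℚ)^(N-k-1) = ((N-k : ℕ) : ℚ)^(N-k) := by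
        rw [← pow_succ']
        congr 1
        omega
      have hfacnat : (N+1).choose (k+1) * (k+1).factorial * (N-k).factorial = (N+1).factorial := by
        have h := Nat.choose_mul_factorial_mul_factorial (show k+1 ≤ N+1 by omega)
        have e1 : N + 1 - (k+1) = N - k := by omega
        rwa [e1] at h
      have hfac : (((N+1).choose (k+1) : ℕ) : ℚ) * ((k+1).factorial : ℚ) * ((N-k).factorial : ℚ)
          = ((N+1).factorial : ℚ) := by exact_mod_cast congrArg (Nat.cast : ℕ → ℚ) hfacnat
      have hf1 : ((k+1).factorial : ℚ) ≠ 0 := Nat.cast_ne_zero.mpr (Nat.factorial_ne_zero _)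
      have hf2 : ((N-k).factorial : ℚ) ≠ 0 := Nat.cast_ne_zero.mpr (Nat.factorial_ne_zero _)
      have hf3 : ((N+1).factorial : ℚ) ≠ 0 := Nat.cast_ne_zero.mpr (Nat.factorial_ne_zero _)
      have hstep : ((N-k : ℕ) : ℚ) * (((N-k : ℕ) : ℚ)^(N-k-1) / ((N-k).factorial : ℚ))
          = ((N-k : ℕ) : ℚ)^(N-k) / ((N-k).factorial : ℚ) := by
        rw [← mul_div_assoc, hpow]
      rw [hstep, div_mul_div_comm]
      push_cast
      rw [div_eq_div_iff (mul_ne_zero hf1 hf2) hf3]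
      linear_combination (-(((k:ℚ)+1)^k * (((N-k:ℕ):ℚ))^(N-k))) * hfac
    rw [Finset.sum_congr rfl hidx, ← Finset.sum_div]
    -- use the key identity
    have hC := lemC N
    rw [Finset.sum_range_succ] at hC
    have hCC : ∑ k ∈ Finset.range N,
        (((N+1).choose (k+1) * (k+1)^k : ℕ) : ℚ) * ((N - k : ℕ) : ℚ) ^ (N - k)
        = ((N:ℚ)+1)^(N+1) - ((N:ℚ)+1)^N := by
      have hlast : (((N+1).choose (N+1) * (N+1)^N : ℕ) : ℚ) * ((N - N : ℕ) : ℚ) ^ (N - N)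
          = ((N:ℚ)+1)^N := by
        have hNN' : N - N = 0 := by omega
        simp [hNN', Nat.choose_self]
        try push_cast
        try ring
      rw [hlast] at hC
      linarith [hC]
    rw [hCC]
    have haN : a (N+1) = ((N+1 : ℕ) : ℚ)^N / ((N+1).factorial : ℚ) := by
      simp [ha, Nat.add_sub_cancel]
    rw [haN]
    have hf3 : ((N+1).factorial : ℚ) ≠ 0 := Nat.cast_ne_zero.mpr (Nat.factorial_ne_zero _)
    field_simp
    push_cast
    ring
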